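/- Let k be a field, let r be a positive integer, and let α : Fin r → ℝ satisfy α i > 0 for every i. There exists a valuation V on the fraction field FractionRing (MvPowerSeries (Fin r) k) with values in ℝ≥0 such that V(algebraMap f) = exp(−w_α(f)) for every nonzero f in MvPowerSeries (Fin r) k. -/

import Mathlib

open scoped NNReal

/-- The α-weighted order `w_α(f) = inf { ∑ i, α i * β i : coeff β f ≠ 0 }` of a
multivariate formal power series. -/
noncomputable def wOrd {k : Type*} [Field k] {r : ℕ} (α : Fin r → ℝ)
    (f : MvPowerSeries (Fin r) k) : ℝ :=
  sInf {x : ℝ | ∃ β : Fin r →₀ ℕ, MvPowerSeries.coeff β f ≠ 0 ∧ x = ∑ i, α i * (β i : ℝ)}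

namespace MonomialValAux

open MvPowerSeries

variable {k : Type*} [Field k] {r : ℕ}

/-- weight of an exponent -/
noncomputable def wt (α : Fin r → ℝ) (β : Fin r →₀ ℕ) : ℝ := ∑ i, α i * (β i : ℝ)

lemma wt_nonneg {α : Fin r → ℝ} (hα : ∀ i, 0 < α i) (β : Fin r →₀ ℕ) : 0 ≤ wt α β :=
  Finset.sum_nonneg fun i _ => mul_nonneg (hα i).le (Nat.cast_nonneg _)

lemma wt_add (α : Fin r → ℝ) (β γ : Fin r →₀ ℕ) : wt α (β + γ) = wt α β + wt α γ := by
  simp only [wt, ← Finset.sum_add_distrib]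
  refine Finset.sum_congr rfl fun i _ => ?_
  simp only [Finsupp.add_apply]
  push_cast
  ring

lemma wt_zero (α : Fin r → ℝ) : wt α 0 = 0 := by simp [wt]

/-- the defining set of `wOrd` -/
def S (α : Fin r → ℝ) (f : MvPowerSeries (Fin r) k) : Set ℝ :=
  {x : ℝ | ∃ β : Fin r →₀ ℕ, MvPowerSeries.coeff β f ≠ 0 ∧ x = wt α β}

lemma wOrd_eq (α : Fin r → ℝ) (f : MvPowerSeries (Fin r) k) : wOrd α f = sInf (S α f) := rfl

lemma bddBelow_S {α : Fin r → ℝ} (hα : ∀ i, 0 < α i) (f : MvPowerSeries (Fin r) k) :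
    BddBelow (S α f) := by
  refine ⟨0, fun x hx => ?_⟩
  obtain ⟨β, -, rfl⟩ := hx
  exact wt_nonneg hα β

lemma exists_coeff_ne_zero {f : MvPowerSeries (Fin r) k} (hf : f ≠ 0) :
    ∃ β : Fin r →₀ ℕ, MvPowerSeries.coeff β f ≠ 0 := by
  by_contra h
  push_neg at h
  exact hf (MvPowerSeries.ext fun β => by simpa using h β)

lemma S_nonempty {α : Fin r → ℝ} {f : MvPowerSeries (Fin r) k} (hf : f ≠ 0) :
    (S α f).Nonempty := by
  obtain ⟨β, hβ⟩ := exists_coeff_ne_zero hf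
  exact ⟨wt α β, β, hβ, rfl⟩

lemma wOrd_le {α : Fin r → ℝ} (hα : ∀ i, 0 < α i) {f : MvPowerSeries (Fin r) k}
    {β : Fin r →₀ ℕ} (hβ : MvPowerSeries.coeff β f ≠ 0) : wOrd α f ≤ wt α β :=
  csInf_le (bddBelow_S hα f) ⟨β, hβ, rfl⟩

lemma le_wOrd {α : Fin r → ℝ} {f : MvPowerSeries (Fin r) k} (hf : f ≠ 0) {c : ℝ}
    (h : ∀ β : Fin r →₀ ℕ, MvPowerSeries.coeff β f ≠ 0 → c ≤ wt α β) :
    c ≤ wOrd α f := by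
  refine le_csInf (S_nonempty hf) ?_
  rintro x ⟨β, hβ, rfl⟩
  exact h β hβ

lemma finite_wt_le (hr : 0 < r) {α : Fin r → ℝ} (hα : ∀ i, 0 < α i) (B : ℝ) :
    {β : Fin r →₀ ℕ | wt α β ≤ B}.Finite := by
  have hne : (Finset.univ : Finset (Fin r)).Nonempty := ⟨⟨0, hr⟩, Finset.mem_univ _⟩
  set ε : ℝ := Finset.univ.inf' hne α with hε
  have hεpos : 0 < ε := by
    rw [hε, Finset.lt_inf'_iff]
    exact fun i _ => hα i
  have key : ∀ β : Fin r →₀ ℕ, wt α β ≤ B → β.degree ≤ ⌊B / ε⌋₊ := by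
    intro β hβ
    have h1 : (β.degree : ℝ) * ε ≤ wt α β := by
      have hdeg : (β.degree : ℝ) = ∑ i, (β i : ℝ) := by
        rw [Finsupp.degree_apply]
        rw [Finset.sum_subset (Finset.subset_univ β.support)]
        · push_cast; rfl
        · intro i _ hi
          simpa using Finsupp.notMem_support_iff.mp hi
      rw [hdeg, Finset.sum_mul]
      refine Finset.sum_le_sum fun i _ => ?_
      rw [mul_comm]
      exact mul_le_mul_of_nonneg_right (Finset.inf'_le α (Finset.mem_univ i))
        (Nat.cast_nonneg _)
    have h2 : (β.degree : ℝ) ≤ B / ε := by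
      rw [le_div_iff₀ hεpos]
      exact h1.trans hβ
    exact Nat.le_floor h2
  exact (Finsupp.finite_of_degree_le (⌊B / ε⌋₊)).subset fun β hβ => key β hβ

/-- the weighted order is attained at a lex-minimal exponent -/
lemma exists_lexmin (hr : 0 < r) {α : Fin r → ℝ} (hα : ∀ i, 0 < α i)
    {f : MvPowerSeries (Fin r) k} (hf : f ≠ 0) :
    ∃ β : Fin r →₀ ℕ, MvPowerSeries.coeff β f ≠ 0 ∧ wOrd α f = wt α β ∧
      ∀ γ : Fin r →₀ ℕ, MvPowerSeries.coeff γ f ≠ 0 →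
        wt α β ≤ wt α γ ∧ (wt α γ = wt α β → toLex β ≤ toLex γ) := by
  obtain ⟨β0, hβ0⟩ := exists_coeff_ne_zero hf
  -- first find a weight-minimal exponent
  have hTfin : {β : Fin r →₀ ℕ | MvPowerSeries.coeff β f ≠ 0 ∧ wt α β ≤ wt α β0}.Finite :=
    (finite_wt_le hr hα (wt α β0)).subset fun β hβ => hβ.2
  have hTne : ({β : Fin r →₀ ℕ | MvPowerSeries.coeff β f ≠ 0 ∧ wt α β ≤ wt α β0}).Nonempty :=
    ⟨β0, hβ0, le_rfl⟩
  obtain ⟨β1, hβ1mem, hβ1min⟩ := Set.exists_min_image _ (wt α) hTfin hTne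
  have hmin : ∀ γ : Fin r →₀ ℕ, MvPowerSeries.coeff γ f ≠ 0 → wt α β1 ≤ wt α γ := by
    intro γ hγ
    by_cases hc : wt α γ ≤ wt α β0
    · exact hβ1min γ ⟨hγ, hc⟩
    · exact hβ1mem.2.trans (not_le.mp hc).le
  have hword : wOrd α f = wt α β1 :=
    le_antisymm (wOrd_le hα hβ1mem.1) (le_wOrd hf hmin)
  -- now take the lex-minimal one among weight-minimal exponents
  have hLfin : {β : Fin r →₀ ℕ | MvPowerSeries.coeff β f ≠ 0 ∧ wt α β = wt α β1}.Finite :=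
    (finite_wt_le hr hα (wt α β1)).subset fun β hβ => hβ.2.le
  have hLne : ({β : Fin r →₀ ℕ | MvPowerSeries.coeff β f ≠ 0 ∧ wt α β = wt α β1}).Nonempty :=
    ⟨β1, hβ1mem.1, rfl⟩
  obtain ⟨β, hβmem, hβmin⟩ := Set.exists_min_image _ (fun β => toLex β) hLfin hLne
  refine ⟨β, hβmem.1, by rw [hword, hβmem.2], fun γ hγ => ?_⟩
  constructor
  · rw [hβmem.2]; exact hmin γ hγ
  · intro hwγ
    exact hβmin γ ⟨hγ, by rw [hwγ, hβmem.2]⟩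

lemma eq_of_le_le_add_eq {M : Type*} [AddCommMonoid M] [LinearOrder M] [IsOrderedCancelAddMonoid M]
    {a a' b b' : M} (ha : a ≤ a') (hb : b ≤ b') (h : a + b = a' + b') : a = a' ∧ b = b' := by
  rcases ha.lt_or_eq with h1 | h1
  · exact absurd h (ne_of_lt (add_lt_add_of_lt_of_le h1 hb))
  · refine ⟨h1, ?_⟩
    rw [h1] at h
    exact add_left_cancel h

lemma wOrd_mul (hr : 0 < r) {α : Fin r → ℝ} (hα : ∀ i, 0 < α i)
    {f g : MvPowerSeries (Fin r) k} (hf : f ≠ 0) (hg : g ≠ 0) :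
    wOrd α (f * g) = wOrd α f + wOrd α g := by
  obtain ⟨βf, hβf, hwf, hminf⟩ := exists_lexmin hr hα hf
  obtain ⟨βg, hβg, hwg, hming⟩ := exists_lexmin hr hα hg
  have hfg : f * g ≠ 0 := mul_ne_zero hf hg
  have hcoeff : MvPowerSeries.coeff (βf + βg) (f * g) =
      MvPowerSeries.coeff βf f * MvPowerSeries.coeff βg g := by
    rw [MvPowerSeries.coeff_mul]
    apply Finset.sum_eq_single (⟨βf, βg⟩ : (Fin r →₀ ℕ) × (Fin r →₀ ℕ))
    · rintro ⟨u, v⟩ h h'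
      simp only [Finset.HasAntidiagonal.mem_antidiagonal] at h
      simp only
      by_contra hne
      have hu : MvPowerSeries.coeff u f ≠ 0 := fun h0 => hne (by rw [h0, zero_mul])
      have hv : MvPowerSeries.coeff v g ≠ 0 := fun h0 => hne (by rw [h0, mul_zero])
      have hsum : wt α u + wt α v = wt α βf + wt α βg := by
        rw [← wt_add, ← wt_add, h]
      have huw : wt α u = wt α βf ∧ wt α v = wt α βg := by
        have h1 := (hminf u hu).1
        have h2 := (hming v hv).1
        constructor <;> linarith
      have hlu : toLex βf ≤ toLex u := (hminf u hu).2 huw.1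
      have hlv : toLex βg ≤ toLex v := (hming v hv).2 huw.2
      have hladd : toLex βf + toLex βg = toLex u + toLex v := by
        rw [← toLex_add, ← toLex_add, h]
      obtain ⟨h1, h2⟩ := eq_of_le_le_add_eq hlu hlv hladd
      exact h' (Prod.ext (toLex.injective h1.symm) (toLex.injective h2.symm))
    · intro h
      simp only [Finset.HasAntidiagonal.mem_antidiagonal, not_true_eq_false] at h
  have hne : MvPowerSeries.coeff (βf + βg) (f * g) ≠ 0 := by
    rw [hcoeff]; exact mul_ne_zero hβf hβg
  refine le_antisymm ?_ ?_
  · calc wOrd α (f * g) ≤ wt α (βf + βg) := wOrd_le hα hne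
    _ = wOrd α f + wOrd α g := by rw [wt_add, hwf, hwg]
  · refine le_wOrd hfg fun β hβ => ?_
    rw [MvPowerSeries.coeff_mul] at hβ
    obtain ⟨⟨u, v⟩, huv, hne'⟩ := Finset.exists_ne_zero_of_sum_ne_zero hβ
    simp only [Finset.HasAntidiagonal.mem_antidiagonal] at huv
    have hu : MvPowerSeries.coeff u f ≠ 0 := fun h0 => hne' (by simp [h0])
    have hv : MvPowerSeries.coeff v g ≠ 0 := fun h0 => hne' (by simp [h0])
    calc wOrd α f + wOrd α g ≤ wt α u + wt α v :=
          add_le_add (hwf ▸ (hminf u hu).1) (hwg ▸ (hming v hv).1)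
    _ = wt α β := by rw [← wt_add, huv]

lemma wOrd_one {α : Fin r → ℝ} (hα : ∀ i, 0 < α i) : wOrd α (1 : MvPowerSeries (Fin r) k) = 0 := by
  have h1 : MvPowerSeries.coeff (0 : Fin r →₀ ℕ) (1 : MvPowerSeries (Fin r) k) ≠ 0 := by
    rw [MvPowerSeries.coeff_zero_one]
    exact one_ne_zero
  refine le_antisymm ?_ ?_
  · have := wOrd_le hα h1
    rwa [wt_zero] at this
  · exact le_wOrd one_ne_zero fun β hβ => wt_nonneg hα β

lemma min_le_wOrd_add {α : Fin r → ℝ} (hα : ∀ i, 0 < α i)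
    {f g : MvPowerSeries (Fin r) k} (hf : f ≠ 0) (hg : g ≠ 0) (hfg : f + g ≠ 0) :
    min (wOrd α f) (wOrd α g) ≤ wOrd α (f + g) := by
  refine le_wOrd hfg fun β hβ => ?_
  rw [map_add] at hβ
  by_cases hc : MvPowerSeries.coeff β f ≠ 0
  · exact (min_le_left _ _).trans (wOrd_le hα hc)
  · push_neg at hc
    rw [hc, zero_add] at hβ
    exact (min_le_right _ _).trans (wOrd_le hα hβ)

end MonomialValAux

open MonomialValAux in
/-- **The monomial valuation on the fraction field (Proposition 2.4.4(2)).**  Let `k` be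
a field, `r ≥ 1`, and let `α : Fin r → ℝ` have positive entries.  There is a valuation
`V` on the fraction field of `MvPowerSeries (Fin r) k`, with values in `ℝ≥0`, such that
`V f = exp (−w_α(f))` for every nonzero power series `f`. -/
theorem exists_monomial_valuation_fractionField
    (k : Type*) [Field k] (r : ℕ) (hr : 0 < r) (α : Fin r → ℝ) (hα : ∀ i, 0 < α i) :
    ∃ V : Valuation (FractionRing (MvPowerSeries (Fin r) k)) ℝ≥0,
      ∀ f : MvPowerSeries (Fin r) k, f ≠ 0 →
        V (algebraMap (MvPowerSeries (Fin r) k) (FractionRing (MvPowerSeries (Fin r) k)) f) =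
          Real.toNNReal (Real.exp (-(wOrd α f))) := by
  classical
  set A := MvPowerSeries (Fin r) k
  set ν : A → ℝ≥0 := fun f =>
    if f = 0 then 0 else Real.toNNReal (Real.exp (-(wOrd α f))) with hν
  have ν_ne_zero : ∀ f : A, f ≠ 0 → ν f = Real.toNNReal (Real.exp (-(wOrd α f))) :=
    fun f hf => if_neg hf
  let vA : Valuation A ℝ≥0 := {
    toFun := ν
    map_zero' := if_pos rfl
    map_one' := by
      show ν 1 = 1
      rw [ν_ne_zero 1 one_ne_zero, wOrd_one hα]
      simp
    map_mul' := fun f g => by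
      show ν (f * g) = ν f * ν g
      by_cases hf : f = 0
      · simp [hν, hf]
      by_cases hg : g = 0
      · simp [hν, hg]
      have hfg : f * g ≠ 0 := mul_ne_zero hf hg
      rw [ν_ne_zero _ hfg, ν_ne_zero _ hf, ν_ne_zero _ hg, wOrd_mul hr hα hf hg,
        ← Real.toNNReal_mul (Real.exp_pos _).le, ← Real.exp_add]
      ring_nf
    map_add_le_max' := fun f g => by
      show ν (f + g) ≤ max (ν f) (ν g)
      by_cases hf : f = 0
      · simp only [hν, hf, zero_add]
        exact le_max_right _ _
      by_cases hg : g = 0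
      · simp only [hν, hg, add_zero]
        exact le_max_left _ _
      by_cases hfg : f + g = 0
      · simp only [hν, hfg, if_pos rfl]
        exact zero_le
      rw [ν_ne_zero _ hfg, ν_ne_zero _ hf, ν_ne_zero _ hg]
      have h1 := min_le_wOrd_add hα hf hg hfg
      have h2 : Real.exp (-(wOrd α (f + g))) ≤
          max (Real.exp (-(wOrd α f))) (Real.exp (-(wOrd α g))) := by
        rcases min_cases (wOrd α f) (wOrd α g) with ⟨hm, _⟩ | ⟨hm, _⟩
        · refine le_max_of_le_left (Real.exp_le_exp.mpr ?_)
          rw [hm] at h1; linarith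
        · refine le_max_of_le_right (Real.exp_le_exp.mpr ?_)
          rw [hm] at h1; linarith
      calc Real.toNNReal (Real.exp (-(wOrd α (f + g)))) ≤
            Real.toNNReal (max (Real.exp (-(wOrd α f))) (Real.exp (-(wOrd α g)))) :=
          Real.toNNReal_mono h2
        _ = max (Real.toNNReal (Real.exp (-(wOrd α f))))
              (Real.toNNReal (Real.exp (-(wOrd α g)))) :=
          Real.toNNReal_monotone.map_max }
  have hS : nonZeroDivisors A ≤ vA.supp.primeCompl := by
    intro x hx
    have hx0 : x ≠ 0 := nonZeroDivisors.ne_zero hx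
    simp only [Ideal.primeCompl, Submonoid.mem_mk, Subsemigroup.mem_mk, Set.mem_compl_iff,
      SetLike.mem_coe, Valuation.mem_supp_iff]
    show vA x ≠ 0
    show ν x ≠ 0
    rw [ν_ne_zero x hx0]
    simp [Real.toNNReal_eq_zero, not_le, Real.exp_pos]
  refine ⟨vA.extendToLocalization hS (FractionRing A), fun f hf => ?_⟩
  rw [Valuation.extendToLocalization_apply_map_apply]
  show ν f = _
  exact ν_ne_zero f hf
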